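/- For every integer n ≥ 3, every optimal strong matching preclusion set of the n-dimensional bubble-sort star graph BS_n consists of two vertices lying in the same bipartition class of BS_n, i.e. it is a set {u, v} of two distinct permutations of {1,…,n} having the same parity (both even or both odd). -/

import Mathlib

/-- The generating relation of the bubble-sort star graph: `u = v ∘ ⟨1,i⟩` for some
`i ∈ [2,n]` (0-based: swap of positions `0` and `i` with `i ≠ 0`), or `u = v ∘ ⟨i-1,i⟩`
for some `i ∈ [3,n]` (0-based: swap of consecutive positions `i, j = i+1` with `i ≥ 1`). -/
def bssRel (n : ℕ) (u v : Equiv.Perm (Fin n)) : Prop :=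
  (∃ i : Fin n, (i : ℕ) ≠ 0 ∧ u = v * Equiv.swap ⟨0, i.pos⟩ i) ∨
  (∃ i j : Fin n, (i : ℕ) + 1 = (j : ℕ) ∧ 1 ≤ (i : ℕ) ∧ u = v * Equiv.swap i j)

/-- The `n`-dimensional bubble-sort star graph `BS_n`, on the permutations of `{1,…,n}`. -/
def BS (n : ℕ) : SimpleGraph (Equiv.Perm (Fin n)) := SimpleGraph.fromRel (bssRel n)

/-- A set of edges `M` is a perfect matching of `G`: `M` consists of edges of `G` and
every vertex lies in exactly one edge of `M`. -/
def IsPM {V : Type*} (G : SimpleGraph V) (M : Set (Sym2 V)) : Prop :=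
  M ⊆ G.edgeSet ∧ ∀ v : V, ∃! e : Sym2 V, e ∈ M ∧ v ∈ e

/-- A set of edges `M` is an almost-perfect matching of `G`: there is exactly one
vertex lying in no edge of `M`, and every other vertex lies in exactly one edge of `M`. -/
def IsAPM {V : Type*} (G : SimpleGraph V) (M : Set (Sym2 V)) : Prop :=
  M ⊆ G.edgeSet ∧ ∃ w : V, (∀ e ∈ M, w ∉ e) ∧ ∀ v : V, v ≠ w → ∃! e : Sym2 V, e ∈ M ∧ v ∈ e

/-- `G` has neither a perfect matching nor an almost-perfect matching. -/
def HasNoMatchings {V : Type*} (G : SimpleGraph V) : Prop :=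
  (¬ ∃ M, IsPM G M) ∧ (¬ ∃ M, IsAPM G M)

/-- `(S, F)` is a strong matching preclusion set of `G`: deleting the vertices of `S`
(with all incident edges) and the edges of `F` leaves a graph with neither a perfect
matching nor an almost-perfect matching. -/
def IsSMPSet {V : Type*} (G : SimpleGraph V) (S : Set V) (F : Set (Sym2 V)) : Prop :=
  F ⊆ G.edgeSet ∧ HasNoMatchings ((G.deleteEdges F).induce (Sᶜ : Set V))

/-- `F` is a matching preclusion set of `G`: `G - F` has neither a perfect matching
nor an almost-perfect matching. -/
def IsMPSet {V : Type*} (G : SimpleGraph V) (F : Set (Sym2 V)) : Prop :=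
  F ⊆ G.edgeSet ∧ HasNoMatchings (G.deleteEdges F)

/-- `BS_n^i`: the set of permutations whose last entry equals `i`. -/
def BSslice {n : ℕ} (i : Fin n) : Set (Equiv.Perm (Fin n)) :=
  {a | a ⟨n - 1, Nat.sub_lt i.pos Nat.one_pos⟩ = i}

/-- `(V₁, V₂)` is a bipartition of `G`: the two classes partition the vertices and every
edge has one end in each class. -/
def Bipartition {V : Type*} (G : SimpleGraph V) (V1 V2 : Set V) : Prop :=
  Disjoint V1 V2 ∧ V1 ∪ V2 = Set.univ ∧
    ∀ ⦃u v⦄, G.Adj u v → (u ∈ V1 ∧ v ∈ V2) ∨ (u ∈ V2 ∧ v ∈ V1)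

namespace SMPAux

open Equiv Equiv.Perm

variable {n : ℕ}

/-- The generating set of `BS n`. -/
def Gens (n : ℕ) : Set (Equiv.Perm (Fin n)) :=
  {g | (∃ i : Fin n, (i : ℕ) ≠ 0 ∧ g = Equiv.swap ⟨0, i.pos⟩ i) ∨
    (∃ i j : Fin n, (i : ℕ) + 1 = (j : ℕ) ∧ 1 ≤ (i : ℕ) ∧ g = Equiv.swap i j)}

lemma gens_isSwap {g : Equiv.Perm (Fin n)} (hg : g ∈ Gens n) :
    ∃ a b : Fin n, a ≠ b ∧ g = Equiv.swap a b := by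
  rcases hg with ⟨i, hi, rfl⟩ | ⟨i, j, hij, _, rfl⟩
  · exact ⟨_, i, fun h => hi (by simpa using (congrArg Fin.val h).symm), rfl⟩
  · exact ⟨i, j, fun h => by have := congrArg Fin.val h; omega, rfl⟩

lemma gens_mul_self {g : Equiv.Perm (Fin n)} (hg : g ∈ Gens n) : g * g = 1 := by
  obtain ⟨a, b, -, rfl⟩ := gens_isSwap hg
  exact Equiv.swap_mul_self a b

lemma gens_ne_one {g : Equiv.Perm (Fin n)} (hg : g ∈ Gens n) : g ≠ 1 := by
  obtain ⟨a, b, hab, rfl⟩ := gens_isSwap hg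
  simpa [Equiv.swap_eq_one_iff] using hab

lemma gens_sign {g : Equiv.Perm (Fin n)} (hg : g ∈ Gens n) : Equiv.Perm.sign g = -1 := by
  obtain ⟨a, b, hab, rfl⟩ := gens_isSwap hg
  exact Equiv.Perm.sign_swap hab

lemma bs_adj {u v : Equiv.Perm (Fin n)} :
    (BS n).Adj u v ↔ ∃ g ∈ Gens n, v = u * g := by
  constructor
  · rintro ⟨hne, h | h⟩
    · rcases h with ⟨i, hi, rfl⟩ | ⟨i, j, hij, hi1, rfl⟩
      · exact ⟨_, Or.inl ⟨i, hi, rfl⟩, by rw [mul_assoc, Equiv.swap_mul_self, mul_one]⟩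
      · exact ⟨_, Or.inr ⟨i, j, hij, hi1, rfl⟩, by rw [mul_assoc, Equiv.swap_mul_self, mul_one]⟩
    · rcases h with ⟨i, hi, h⟩ | ⟨i, j, hij, hi1, h⟩
      · exact ⟨_, Or.inl ⟨i, hi, rfl⟩, h⟩
      · exact ⟨_, Or.inr ⟨i, j, hij, hi1, rfl⟩, h⟩
  · rintro ⟨g, hg, rfl⟩
    refine ⟨fun h => gens_ne_one hg (mul_left_cancel (a := u) (by rw [mul_one, ← h])), Or.inr ?_⟩
    · rcases hg with ⟨i, hi, rfl⟩ | ⟨i, j, hij, hi1, rfl⟩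
      · exact Or.inl ⟨i, hi, rfl⟩
      · exact Or.inr ⟨i, j, hij, hi1, rfl⟩



variable {V : Type*} {G : SimpleGraph V} {S : Set V} {F : Set (Sym2 V)}

/-- Lift a matching of the full graph to the damaged induced graph. -/
def liftM (S : Set V) (M₀ : Set (Sym2 V)) : Set (Sym2 (Sᶜ : Set V)) :=
  {E | Sym2.map Subtype.val E ∈ M₀}

lemma lift_isPM (M₀ : Set (Sym2 V))
    (hedge : ∀ a b, s(a, b) ∈ M₀ → G.Adj a b ∧ s(a, b) ∉ F ∧ a ∈ Sᶜ ∧ b ∈ Sᶜ)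
    (hcov : ∀ v ∈ Sᶜ, ∃! e, e ∈ M₀ ∧ v ∈ e) :
    IsPM ((G.deleteEdges F).induce (Sᶜ : Set V)) (liftM S M₀) := by
  constructor
  · intro E hE
    induction E using Sym2.inductionOn with
    | hf p q =>
      obtain ⟨h1, h2, -, -⟩ := hedge p.1 q.1 (by simpa [liftM] using hE)
      simpa [SimpleGraph.mem_edgeSet, SimpleGraph.deleteEdges_adj] using ⟨h1, h2⟩
  · rintro ⟨v, hv⟩
    obtain ⟨e, ⟨heM, hve⟩, huniq⟩ := hcov v hv
    induction e using Sym2.inductionOn with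
    | hf a b =>
      obtain ⟨-, -, ha, hb⟩ := hedge a b heM
      refine ⟨s(⟨a, ha⟩, ⟨b, hb⟩), ⟨by simpa [liftM] using heM, ?_⟩, ?_⟩
      · rcases (Sym2.mem_iff).1 hve with h | h <;> subst h <;> simp
      · rintro E' ⟨hE'M, hvE'⟩
        have hmap : Sym2.map Subtype.val E' = s(a, b) := by
          refine huniq _ ⟨hE'M, ?_⟩
          exact Sym2.mem_map.2 ⟨⟨v, hv⟩, hvE', rfl⟩
        have : Sym2.map (Subtype.val : (Sᶜ : Set V) → V) s(⟨a, ha⟩, ⟨b, hb⟩) = s(a, b) := by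
          simp
        exact Sym2.map.injective Subtype.val_injective (hmap.trans this.symm)

lemma lift_isAPM (M₀ : Set (Sym2 V)) (w : V) (hw : w ∈ Sᶜ)
    (hedge : ∀ a b, s(a, b) ∈ M₀ → G.Adj a b ∧ s(a, b) ∉ F ∧ a ∈ Sᶜ ∧ b ∈ Sᶜ)
    (hwno : ∀ e ∈ M₀, w ∉ e)
    (hcov : ∀ v ∈ Sᶜ, v ≠ w → ∃! e, e ∈ M₀ ∧ v ∈ e) :
    IsAPM ((G.deleteEdges F).induce (Sᶜ : Set V)) (liftM S M₀) := by
  constructor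
  · intro E hE
    induction E using Sym2.inductionOn with
    | hf p q =>
      obtain ⟨h1, h2, -, -⟩ := hedge p.1 q.1 (by simpa [liftM] using hE)
      simpa [SimpleGraph.mem_edgeSet, SimpleGraph.deleteEdges_adj] using ⟨h1, h2⟩
  · refine ⟨⟨w, hw⟩, ?_, ?_⟩
    · intro E hE hwE
      exact hwno _ hE (Sym2.mem_map.2 ⟨⟨w, hw⟩, hwE, rfl⟩)
    · rintro ⟨v, hv⟩ hvw
      have hvw' : v ≠ w := fun h => hvw (Subtype.ext h)
      obtain ⟨e, ⟨heM, hve⟩, huniq⟩ := hcov v hv hvw'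
      induction e using Sym2.inductionOn with
      | hf a b =>
        obtain ⟨-, -, ha, hb⟩ := hedge a b heM
        refine ⟨s(⟨a, ha⟩, ⟨b, hb⟩), ⟨by simpa [liftM] using heM, ?_⟩, ?_⟩
        · rcases (Sym2.mem_iff).1 hve with h | h <;> subst h <;> simp
        · rintro E' ⟨hE'M, hvE'⟩
          have hmap : Sym2.map Subtype.val E' = s(a, b) := by
            refine huniq _ ⟨hE'M, ?_⟩
            exact Sym2.mem_map.2 ⟨⟨v, hv⟩, hvE', rfl⟩
          have : Sym2.map (Subtype.val : (Sᶜ : Set V) → V) s(⟨a, ha⟩, ⟨b, hb⟩) = s(a, b) := by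
            simp
          exact Sym2.map.injective Subtype.val_injective (hmap.trans this.symm)



variable {n : ℕ}

/-- The canonical perfect matching associated with a generator `g`. -/
def Mg (g : Equiv.Perm (Fin n)) : Set (Sym2 (Equiv.Perm (Fin n))) :=
  {e | ∃ x, e = s(x, x * g)}

lemma mg_disjoint {g h : Equiv.Perm (Fin n)} (hg : g ∈ Gens n) (hh : h ∈ Gens n)
    (hne : g ≠ h) {e : Sym2 (Equiv.Perm (Fin n))} (h1 : e ∈ Mg g) (h2 : e ∈ Mg h) : False := by
  obtain ⟨x, rfl⟩ := h1
  obtain ⟨y, hy⟩ := h2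
  rcases Sym2.eq_iff.1 hy with ⟨rfl, h'⟩ | ⟨h', h''⟩
  · exact hne (mul_left_cancel h')
  · subst h'
    have hhg : h * g = 1 := by
      have h3 := h''
      rw [mul_assoc] at h3
      exact mul_left_cancel (a := y) (by rw [h3, mul_one])
    have : g = h := by
      calc g = 1 * g := (one_mul g).symm
        _ = h * h * g := by rw [gens_mul_self hh]
        _ = h * (h * g) := by rw [mul_assoc]
        _ = h := by rw [hhg, mul_one]
    exact hne this

lemma mem_mg_self (g x : Equiv.Perm (Fin n)) : s(x, x * g) ∈ Mg g := ⟨x, rfl⟩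

lemma mg_cover {g : Equiv.Perm (Fin n)} (hg : g ∈ Gens n) (v : Equiv.Perm (Fin n)) :
    ∀ e ∈ Mg g, v ∈ e → e = s(v, v * g) := by
  rintro e ⟨x, rfl⟩ hv
  rcases Sym2.mem_iff.1 hv with rfl | h
  · rfl
  · subst h
    rw [mul_assoc, gens_mul_self hg, mul_one, Sym2.eq_swap]



variable {n : ℕ}

lemma gens_inv_eq {g : Equiv.Perm (Fin n)} (hg : g ∈ Gens n) : g⁻¹ = g :=
  inv_eq_of_mul_eq_one_right (gens_mul_self hg)

lemma closure_gens_top : Subgroup.closure (Gens n) = ⊤ := by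
  rw [← Equiv.Perm.closure_isSwap]
  refine le_antisymm (Subgroup.closure_le _ |>.2 ?_) (Subgroup.closure_le _ |>.2 ?_)
  · rintro σ hσ
    obtain ⟨a, b, hab, rfl⟩ := gens_isSwap hσ
    exact Subgroup.subset_closure ⟨a, b, hab, rfl⟩
  · rintro σ ⟨a, b, hab, rfl⟩
    by_cases ha : (a : ℕ) = 0
    · have : a = ⟨0, b.pos⟩ := Fin.ext ha
      subst this
      refine Subgroup.subset_closure (Or.inl ⟨b, ?_, rfl⟩)
      intro hb; exact hab (Fin.ext hb.symm)
    · by_cases hb : (b : ℕ) = 0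
      · have : b = ⟨0, a.pos⟩ := Fin.ext hb
        subst this
        rw [Equiv.swap_comm]
        exact Subgroup.subset_closure (Or.inl ⟨a, ha, rfl⟩)
      · set z : Fin n := ⟨0, a.pos⟩ with hz
        have hbz : b ≠ z := fun h => hb (congrArg Fin.val h)
        have h1 : Equiv.swap z a ∈ Gens n := Or.inl ⟨a, ha, rfl⟩
        have h2 : Equiv.swap b z ∈ Gens n := by
          rw [Equiv.swap_comm]; exact Or.inl ⟨b, fun h => hbz (Fin.ext h), rfl⟩
        have key : Equiv.swap z a * Equiv.swap b z * Equiv.swap z a = Equiv.swap a b :=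
          Equiv.swap_mul_swap_mul_swap hbz (Ne.symm hab)
        rw [← key]
        exact mul_mem (mul_mem (Subgroup.subset_closure h1) (Subgroup.subset_closure h2))
          (Subgroup.subset_closure h1)

/-- The even "double-step" generators `s * t`. -/
def Aset (n : ℕ) (s : Equiv.Perm (Fin n)) : Set (Equiv.Perm (Fin n)) :=
  {g | ∃ t ∈ Gens n, t ≠ s ∧ g = s * t}

variable {s : Equiv.Perm (Fin n)}

lemma scs (hss : s * s = 1) (a : Equiv.Perm (Fin n)) : s * (s * a) = a := by
  rw [← mul_assoc, hss, one_mul]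

lemma conjS (hs : s ∈ Gens n) {h : Equiv.Perm (Fin n)}
    (hh : h ∈ Subgroup.closure (Aset n s)) : s * h * s ∈ Subgroup.closure (Aset n s) := by
  have hss : s * s = 1 := gens_mul_self hs
  induction hh using Subgroup.closure_induction with
  | mem x hx =>
    obtain ⟨t, ht, hts, rfl⟩ := hx
    have e1 : s * (s * t) * s = t * s := by simp only [mul_assoc, scs hss]
    rw [e1]
    have e2 : t * s = (s * t)⁻¹ := by
      rw [mul_inv_rev, gens_inv_eq hs, gens_inv_eq ht]
    rw [e2]
    exact inv_mem (Subgroup.subset_closure ⟨t, ht, hts, rfl⟩)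
  | one => simpa [hss] using one_mem (Subgroup.closure (Aset n s))
  | mul x y hx hy ihx ihy =>
    have e1 : s * (x * y) * s = (s * x * s) * (s * y * s) := by
      simp only [mul_assoc, scs hss]
    rw [e1]; exact mul_mem ihx ihy
  | inv x hx ihx =>
    have e1 : s * x⁻¹ * s = (s * x * s)⁻¹ := by
      simp [mul_inv_rev, gens_inv_eq hs, mul_assoc]
    rw [e1]; exact inv_mem ihx

lemma even_mem_closureA (hs : s ∈ Gens n) {g : Equiv.Perm (Fin n)}
    (hg : Equiv.Perm.sign g = 1) : g ∈ Subgroup.closure (Aset n s) := by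
  set H := Subgroup.closure (Aset n s) with hH
  have hss : s * s = 1 := gens_mul_self hs
  have key : ∀ g : Equiv.Perm (Fin n),
      (Equiv.Perm.sign g = 1 → g ∈ H) ∧ (Equiv.Perm.sign g = -1 → s * g ∈ H) := by
    intro g
    have hgmem : g ∈ Subgroup.closure (Gens n) := by rw [closure_gens_top]; trivial
    induction hgmem using Subgroup.closure_induction with
    | mem t ht =>
      constructor
      · intro h1; rw [gens_sign ht] at h1; exact absurd h1 (by decide)
      · intro _
        by_cases hts : t = s
        · subst hts; simpa [hss] using one_mem H
        · exact Subgroup.subset_closure ⟨t, ht, hts, rfl⟩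
    | one =>
      refine ⟨fun _ => one_mem H, fun h1 => ?_⟩
      rw [map_one] at h1; exact absurd h1 (by decide)
    | mul x y hx hy ihx ihy =>
      have hmul : Equiv.Perm.sign (x * y) = Equiv.Perm.sign x * Equiv.Perm.sign y := map_mul _ _ _
      rcases Int.units_eq_one_or (Equiv.Perm.sign x) with hsx | hsx <;>
        rcases Int.units_eq_one_or (Equiv.Perm.sign y) with hsy | hsy
      · refine ⟨fun _ => mul_mem (ihx.1 hsx) (ihy.1 hsy), fun h1 => ?_⟩
        rw [hmul, hsx, hsy] at h1; exact absurd h1 (by decide)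
      · refine ⟨fun h1 => ?_, fun _ => ?_⟩
        · rw [hmul, hsx, hsy] at h1; exact absurd h1 (by decide)
        · have e1 : s * (x * y) = (s * x * s) * (s * y) := by
            simp only [mul_assoc, scs hss]
          rw [e1]; exact mul_mem (conjS hs (ihx.1 hsx)) (ihy.2 hsy)
      · refine ⟨fun h1 => ?_, fun _ => ?_⟩
        · rw [hmul, hsx, hsy] at h1; exact absurd h1 (by decide)
        · rw [← mul_assoc]; exact mul_mem (ihx.2 hsx) (ihy.1 hsy)
      · refine ⟨fun _ => ?_, fun h1 => ?_⟩
        · have hxs : x * s ∈ H := by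
            have h3 := conjS hs (ihx.2 hsx)
            have h2 : s * (s * x) * s = x * s := by simp only [mul_assoc, scs hss]
            rwa [h2] at h3
          have e1 : x * y = (x * s) * (s * y) := by simp only [mul_assoc, scs hss]
          rw [e1]; exact mul_mem hxs (ihy.2 hsy)
        · rw [hmul, hsx, hsy] at h1; exact absurd h1 (by decide)
    | inv x hx ihx =>
      have hsi : Equiv.Perm.sign x⁻¹ = Equiv.Perm.sign x := by simp
      rcases Int.units_eq_one_or (Equiv.Perm.sign x) with hsx | hsx
      · refine ⟨fun _ => inv_mem (ihx.1 hsx), fun h1 => ?_⟩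
        rw [hsi, hsx] at h1; exact absurd h1 (by decide)
      · refine ⟨fun h1 => ?_, fun _ => ?_⟩
        · rw [hsi, hsx] at h1; exact absurd h1 (by decide)
        · have hxs : x * s ∈ H := by
            have h3 := conjS hs (ihx.2 hsx)
            have h2 : s * (s * x) * s = x * s := by simp only [mul_assoc, scs hss]
            rwa [h2] at h3
          have e1 : s * x⁻¹ = (x * s)⁻¹ := by rw [mul_inv_rev, gens_inv_eq hs]
          rw [e1]; exact inv_mem hxs
  exact (key g).1 hg

lemma mem_submonoid_of_mem_closure {A : Set (Equiv.Perm (Fin n))} {g : Equiv.Perm (Fin n)}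
    (hg : g ∈ Subgroup.closure A) : g ∈ Submonoid.closure A := by
  induction hg using Subgroup.closure_induction with
  | mem x hx => exact Submonoid.subset_closure hx
  | one => exact one_mem _
  | mul x y hx hy ihx ihy => exact mul_mem ihx ihy
  | inv x hx ihx =>
    have ho : 0 < orderOf x := orderOf_pos x
    have h1 : x⁻¹ = x ^ (orderOf x - 1) := by
      apply inv_eq_of_mul_eq_one_right
      rw [← pow_succ', Nat.sub_add_cancel ho]
      exact pow_orderOf_eq_one x
    rw [h1]
    exact pow_mem ihx _

/-- One step along the alternating-path digraph. -/
def Step (n : ℕ) (s : Equiv.Perm (Fin n)) (a b : Equiv.Perm (Fin n)) : Prop :=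
  ∃ g ∈ Aset n s, b = a * g

lemma reach_of_submonoid {w : Equiv.Perm (Fin n)} (hw : w ∈ Submonoid.closure (Aset n s)) :
    ∀ x, Relation.ReflTransGen (Step n s) x (x * w) := by
  induction hw using Submonoid.closure_induction with
  | mem g hg => exact fun x => Relation.ReflTransGen.single ⟨g, hg, rfl⟩
  | one => intro x; rw [mul_one]
  | mul a b ha hb iha ihb =>
    intro x
    have h1 := (iha x).trans (ihb (x * a))
    rwa [mul_assoc] at h1

lemma reach_target (hs : s ∈ Gens n) {u v : Equiv.Perm (Fin n)}
    (hsign : Equiv.Perm.sign v = - Equiv.Perm.sign u) :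
    Relation.ReflTransGen (Step n s) u (v * s) := by
  have hw : Equiv.Perm.sign (u⁻¹ * (v * s)) = 1 := by
    rw [map_mul, map_mul, map_inv, hsign, gens_sign hs]
    rcases Int.units_eq_one_or (Equiv.Perm.sign u) with h | h <;> rw [h] <;> decide
  have h1 := reach_of_submonoid (mem_submonoid_of_mem_closure (even_mem_closureA hs hw)) u
  rwa [mul_inv_cancel_left] at h1


section Chains

variable {α : Type*} {r : α → α → Prop}

lemma take_to_mem {c : α} : ∀ (L : List α), c ∈ L →
    ∃ L₁, L₁ <+: L ∧ ∃ h : L₁ ≠ [], L₁.getLast h = c := by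
  intro L hc
  induction L with
  | nil => simp at hc
  | cons x t ih =>
    rcases eq_or_ne x c with rfl | hxc
    · exact ⟨[x], ⟨t, rfl⟩, by simp, rfl⟩
    · have hct : c ∈ t := by
        rcases List.mem_cons.1 hc with h | h
        · exact absurd h.symm hxc
        · exact h
      obtain ⟨L₁, ⟨T, hT⟩, hne, hlast⟩ := ih hct
      refine ⟨x :: L₁, ⟨T, by simp [hT]⟩, by simp, ?_⟩
      rw [List.getLast_cons hne]; exact hlast

lemma exists_nodup_chain {a b : α} (h : Relation.ReflTransGen r a b) :
    ∃ l, List.Chain r a l ∧ (a :: l).Nodup ∧ (a :: l).getLast (List.cons_ne_nil a l) = b := by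
  induction h with
  | refl => exact ⟨[], List.Chain.nil, by simp, rfl⟩
  | @tail b' c hab hbc ih =>
    obtain ⟨l, hch, hnd, hlast⟩ := ih
    by_cases hc : c ∈ a :: l
    · obtain ⟨L₁, hpre, hne, hlast₁⟩ := take_to_mem _ hc
      obtain ⟨T, hT⟩ := hpre
      cases L₁ with
      | nil => exact absurd rfl hne
      | cons x l₁ =>
        have hx : x = a ∧ l₁ ++ T = l := by
          have := hT
          rw [List.cons_append] at this
          exact ⟨(List.cons.injEq _ _ _ _ ▸ this).1, (List.cons.injEq _ _ _ _ ▸ this).2⟩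
        obtain ⟨rfl, hlT⟩ := hx
        refine ⟨l₁, ?_, ?_, hlast₁⟩
        · have hch' : List.Chain' r (x :: l) := hch
          exact (hch'.prefix ⟨T, by simp [hlT]⟩ : List.Chain' r (x :: l₁))
        · have hpre2 : (x :: l₁) <+: (x :: l) := ⟨T, by simp [hlT]⟩
          exact List.Nodup.sublist hpre2.sublist hnd
    · refine ⟨l ++ [c], ?_, ?_, ?_⟩
      · have hh2 : List.Chain' r (a :: l) := hch
        have hch' : List.Chain' r ((a :: l) ++ [c]) := by
          apply List.IsChain.append hh2 (by constructor : List.Chain' r [c])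
          intro x hx y hy
          simp only [List.head?_cons, Option.mem_def, Option.some.injEq] at hy
          obtain ⟨_, hx'⟩ := List.mem_getLast?_eq_getLast hx
          subst hy; rw [hx', hlast]; exact hbc
        exact hch'
      · simp only [← List.cons_append, List.nodup_append]
        exact ⟨hnd, by simp, fun x hx y hy h => hc (by rw [List.mem_singleton.1 hy] at h; exact h ▸ hx)⟩
      · exact List.getLast_append_of_ne_nil (l := a :: l) (l' := [c]) _ (by simp)

end Chains

lemma units_ne_neg (a : ℤˣ) : a ≠ -a := by
  rcases Int.units_eq_one_or a with h | h <;> rw [h] <;> decide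

variable {s : Equiv.Perm (Fin n)}

lemma step_sign {a b : Equiv.Perm (Fin n)} (hs : s ∈ Gens n) (h : Step n s a b) :
    Equiv.Perm.sign b = Equiv.Perm.sign a := by
  obtain ⟨g, ⟨t, ht, hts, rfl⟩, rfl⟩ := h
  rw [map_mul, map_mul, gens_sign hs, gens_sign ht]
  simp

lemma chain_sign (hs : s ∈ Gens n) :
    ∀ (l : List (Equiv.Perm (Fin n))) (a), List.Chain (Step n s) a l →
      ∀ x ∈ a :: l, Equiv.Perm.sign x = Equiv.Perm.sign a := by
  intro l
  induction l with
  | nil => intro a _ x hx; rw [List.mem_singleton.1 hx]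
  | cons b t ih =>
    intro a hch x hx
    rcases List.chain_cons.1 hch with ⟨hab, hch'⟩
    rcases List.mem_cons.1 hx with rfl | hx'
    · rfl
    · rw [ih b hch' x hx', step_sign hs hab]

lemma case3 (hs : s ∈ Gens n) {u v : Equiv.Perm (Fin n)}
    (hsign : Equiv.Perm.sign v = - Equiv.Perm.sign u) :
    ∃ M₀ : Set (Sym2 (Equiv.Perm (Fin n))),
      (∀ a b, s(a, b) ∈ M₀ → (BS n).Adj a b ∧ a ≠ u ∧ a ≠ v ∧ b ≠ u ∧ b ≠ v) ∧
      (∀ y, y ≠ u → y ≠ v → ∃! e, e ∈ M₀ ∧ y ∈ e) := by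
  classical
  obtain ⟨l, hch, hnd, hlast⟩ := exists_nodup_chain (reach_target hs hsign)
  set L : List (Equiv.Perm (Fin n)) := u :: l with hL
  have hss : s * s = 1 := gens_mul_self hs
  have hsr : ∀ x : Equiv.Perm (Fin n), x * s * s = x := fun x => by
    rw [mul_assoc, hss, mul_one]
  have hchain' : List.Chain' (Step n s) L := hch
  have hget' := List.isChain_iff_getElem.1 hchain'
  have hget : ∀ (i : ℕ) (h : i + 1 < L.length),
      Step n s (L.get ⟨i, Nat.lt_of_succ_lt h⟩) (L.get ⟨i + 1, h⟩) := fun i h =>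
    hget' i (by omega)
  have hlen : 0 < L.length := by simp [hL]
  have hhead : L.get ⟨0, hlen⟩ = u := rfl
  have huL : u ∈ L := List.mem_cons_self
  have hvsL : v * s ∈ L := hlast ▸ List.getLast_mem _
  have hlast' : L.get ⟨L.length - 1, by omega⟩ = v * s := by
    rw [← hlast, List.getLast_eq_getElem]; rfl
  have hinj : ∀ (i j : Fin L.length), L.get i = L.get j → i = j := fun i j h =>
    (List.Nodup.get_inj_iff hnd).1 h
  have hsgn : ∀ x ∈ L, Equiv.Perm.sign x = Equiv.Perm.sign u :=
    chain_sign hs l u hch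
  have hadj : ∀ x : Equiv.Perm (Fin n), (BS n).Adj x (x * s) := fun x =>
    bs_adj.2 ⟨s, hs, rfl⟩
  have hstep_adj : ∀ {a b : Equiv.Perm (Fin n)}, Step n s a b → (BS n).Adj (a * s) b := by
    rintro a b ⟨g, ⟨t, ht, hts, rfl⟩, rfl⟩
    rw [← mul_assoc]
    exact bs_adj.2 ⟨t, ht, rfl⟩
  -- the matching
  set M₀ : Set (Sym2 (Equiv.Perm (Fin n))) :=
    {e | (∃ i : ℕ, ∃ h : i + 1 < L.length,
        e = s(L.get ⟨i, Nat.lt_of_succ_lt h⟩ * s, L.get ⟨i + 1, h⟩)) ∨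
      (∃ x, x ∉ L ∧ x * s ∉ L ∧ e = s(x, x * s))} with hM₀
  -- sign facts
  have hms : ∀ x ∈ L, x * s ∉ L := by
    intro x hx hxs
    have h1 := hsgn _ hx
    have h2 := hsgn _ hxs
    rw [map_mul, gens_sign hs, h1, mul_neg_one] at h2
    exact units_ne_neg _ h2.symm
  -- endpoints of edges avoid u and v, and edges are BS-edges
  have hedge : ∀ a b, s(a, b) ∈ M₀ → (BS n).Adj a b ∧ a ≠ u ∧ a ≠ v ∧ b ≠ u ∧ b ≠ v := by
    have key : ∀ e ∈ M₀, ∃ p q, e = s(p, q) ∧ (BS n).Adj p q ∧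
        p ≠ u ∧ p ≠ v ∧ q ≠ u ∧ q ≠ v := by
      rintro e (⟨i, h, rfl⟩ | ⟨x, hx1, hx2, rfl⟩)
      · set gi := L.get ⟨i, Nat.lt_of_succ_lt h⟩ with hgi
        set gi1 := L.get ⟨i + 1, h⟩ with hgi1
        refine ⟨gi * s, gi1, rfl, hstep_adj (hget i h), ?_, ?_, ?_, ?_⟩
        · intro hpu
          have h1 := hsgn _ (List.get_mem L ⟨i, Nat.lt_of_succ_lt h⟩)
          rw [← hgi] at h1
          have h2 : Equiv.Perm.sign (gi * s) = - Equiv.Perm.sign u := by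
            rw [map_mul, gens_sign hs, h1]; simp
          rw [hpu] at h2
          exact units_ne_neg _ h2
        · intro hpv
          have h1 : gi = v * s := by rw [← hpv, hsr]
          have h2 : (⟨i, Nat.lt_of_succ_lt h⟩ : Fin L.length) = ⟨L.length - 1, by omega⟩ :=
            hinj _ _ (by rw [← hgi, h1, hlast'])
          have := congrArg Fin.val h2
          simp at this
          omega
        · intro hqu
          have h2 : (⟨i + 1, h⟩ : Fin L.length) = ⟨0, hlen⟩ :=
            hinj _ _ (by rw [← hgi1, hqu, hhead])
          have := congrArg Fin.val h2
          simp at this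
        · intro hqv
          have h1 := hsgn _ (List.get_mem L ⟨i + 1, h⟩)
          rw [← hgi1, hqv, hsign] at h1
          exact units_ne_neg _ h1.symm
      · refine ⟨x, x * s, rfl, hadj x, ?_, ?_, ?_, ?_⟩
        · intro h; exact hx1 (h ▸ huL)
        · intro h; exact hx2 (by rw [h]; exact hvsL)
        · intro h; exact hx2 (h ▸ huL)
        · intro h; exact hx1 (by rw [show x = v * s by rw [← h, hsr]]; exact hvsL)
    intro a b hab
    obtain ⟨p, q, hepq, hadj', hp1, hp2, hq1, hq2⟩ := key _ hab
    rcases Sym2.eq_iff.1 hepq with ⟨rfl, rfl⟩ | ⟨rfl, rfl⟩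
    · exact ⟨hadj', hp1, hp2, hq1, hq2⟩
    · exact ⟨hadj'.symm, hq1, hq2, hp1, hp2⟩
  refine ⟨M₀, hedge, ?_⟩
  intro y hyu hyv
  by_cases hyL : y ∈ L
  · -- y is an interior path vertex  L.get j, j ≥ 1
    obtain ⟨⟨j, hj⟩, hyj⟩ := List.mem_iff_get.1 hyL
    have hj0 : j ≠ 0 := by
      intro h; subst h; exact hyu (by rw [← hyj, hhead])
    have hj1 : (j - 1) + 1 < L.length := by omega
    have hfix : (⟨(j - 1) + 1, hj1⟩ : Fin L.length) = ⟨j, hj⟩ := by simp only [Fin.mk.injEq]; omega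
    refine ⟨s(L.get ⟨j - 1, Nat.lt_of_succ_lt hj1⟩ * s, L.get ⟨(j - 1) + 1, hj1⟩),
      ⟨Or.inl ⟨j - 1, hj1, rfl⟩, ?_⟩, ?_⟩
    · rw [hfix, hyj]; simp
    · rintro e' ⟨(⟨i, h, rfl⟩ | ⟨x, hx1, hx2, rfl⟩), hye'⟩
      · rcases Sym2.mem_iff.1 hye' with h1 | h1
        · exfalso
          have h2 := hsgn _ (List.get_mem L ⟨i, Nat.lt_of_succ_lt h⟩)
          have h3 : Equiv.Perm.sign y = Equiv.Perm.sign u := hsgn _ hyL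
          rw [h1, map_mul, gens_sign hs, h2, mul_neg_one] at h3
          exact units_ne_neg _ h3.symm
        · have h2 : (⟨i + 1, h⟩ : Fin L.length) = ⟨j, hj⟩ := hinj _ _ (by rw [← h1, hyj])
          have h3 := congrArg Fin.val h2
          simp only at h3
          have h4 : i = j - 1 := by omega
          subst h4
          rw [hfix]
      · exfalso
        rcases Sym2.mem_iff.1 hye' with h1 | h1
        · exact hx1 (h1 ▸ hyL)
        · exact hx2 (h1 ▸ hyL)
  · by_cases hysL : y * s ∈ L
    · -- y = (path vertex) * s, matched by a cross edge
      obtain ⟨⟨j, hj⟩, hyj⟩ := List.mem_iff_get.1 hysL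
      have hjne : j ≠ L.length - 1 := by
        intro h
        apply hyv
        have : L.get ⟨j, hj⟩ = v * s := by
          rw [show (⟨j, hj⟩ : Fin L.length) = ⟨L.length - 1, by omega⟩ from by simp only [Fin.mk.injEq]; omega]
          exact hlast'
        rw [this] at hyj
        exact mul_right_cancel hyj.symm
      have hj1 : j + 1 < L.length := by omega
      have hyg : L.get ⟨j, Nat.lt_of_succ_lt hj1⟩ * s = y := by
        rw [show (⟨j, Nat.lt_of_succ_lt hj1⟩ : Fin L.length) = ⟨j, hj⟩ from rfl, hyj, hsr]
      refine ⟨s(L.get ⟨j, Nat.lt_of_succ_lt hj1⟩ * s, L.get ⟨j + 1, hj1⟩),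
        ⟨Or.inl ⟨j, hj1, rfl⟩, by rw [hyg]; simp⟩, ?_⟩
      rintro e' ⟨(⟨i, h, rfl⟩ | ⟨x, hx1, hx2, rfl⟩), hye'⟩
      · rcases Sym2.mem_iff.1 hye' with h1 | h1
        · have h2 : L.get ⟨i, Nat.lt_of_succ_lt h⟩ = L.get ⟨j, hj⟩ := by
            rw [hyj, h1, hsr]
          have h3 := congrArg Fin.val (hinj _ _ h2)
          simp only at h3
          subst h3
          rfl
        · exact absurd (h1 ▸ List.get_mem L ⟨i + 1, h⟩) hyL
      · exfalso
        rcases Sym2.mem_iff.1 hye' with h1 | h1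
        · exact hx2 (by rw [← h1]; exact hysL)
        · exact hx1 (by rw [show x = y * s by rw [h1, hsr]]; exact hysL)
    · -- y is in a free coset
      refine ⟨s(y, y * s), ⟨Or.inr ⟨y, hyL, hysL, rfl⟩, by simp⟩, ?_⟩
      rintro e' ⟨(⟨i, h, rfl⟩ | ⟨x, hx1, hx2, rfl⟩), hye'⟩
      · exfalso
        rcases Sym2.mem_iff.1 hye' with h1 | h1
        · exact hysL (by rw [h1, hsr]; exact List.get_mem L _)
        · exact hyL (h1 ▸ List.get_mem L _)
      · rcases Sym2.mem_iff.1 hye' with h1 | h1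
        · rw [h1]
        · have h2 : x = y * s := by rw [h1, hsr]
          subst h2
          rw [hsr, Sym2.eq_swap]

end SMPAux

namespace SMPAux

lemma gens3 (hn : 3 ≤ n) : ∃ s0 t0 r0 : Equiv.Perm (Fin n),
    s0 ∈ Gens n ∧ t0 ∈ Gens n ∧ r0 ∈ Gens n ∧ s0 ≠ t0 ∧ s0 ≠ r0 ∧ t0 ≠ r0 := by
  have h0 : 0 < n := by omega
  have h1 : 1 < n := by omega
  have h2 : 2 < n := by omega
  set z : Fin n := ⟨0, h0⟩
  set o : Fin n := ⟨1, h1⟩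
  set w : Fin n := ⟨2, h2⟩
  have hzo : z ≠ o := Fin.ne_of_val_ne (by norm_num)
  have hzw : z ≠ w := Fin.ne_of_val_ne (by norm_num)
  have how : o ≠ w := Fin.ne_of_val_ne (by norm_num)
  refine ⟨Equiv.swap z o, Equiv.swap z w, Equiv.swap o w, ?_, ?_, ?_, ?_, ?_, ?_⟩
  · exact Or.inl ⟨o, by norm_num, rfl⟩
  · exact Or.inl ⟨w, by norm_num, rfl⟩
  · exact Or.inr ⟨o, w, by norm_num, by norm_num, rfl⟩
  · intro h
    have := Equiv.ext_iff.1 h o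
    rw [Equiv.swap_apply_right, Equiv.swap_apply_of_ne_of_ne (Ne.symm hzo) how] at this
    exact hzo this
  · intro h
    have := Equiv.ext_iff.1 h z
    rw [Equiv.swap_apply_left, Equiv.swap_apply_of_ne_of_ne hzo hzw] at this
    exact hzo this.symm
  · intro h
    have := Equiv.ext_iff.1 h z
    rw [Equiv.swap_apply_left, Equiv.swap_apply_of_ne_of_ne hzo hzw] at this
    exact hzw this.symm

lemma mg_edge {g : Equiv.Perm (Fin n)} (hg : g ∈ Gens n) {a b : Equiv.Perm (Fin n)}
    (hab : s(a, b) ∈ Mg g) : (BS n).Adj a b := by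
  obtain ⟨x, hx⟩ := hab
  rcases Sym2.eq_iff.1 hx with ⟨rfl, rfl⟩ | ⟨rfl, rfl⟩
  · exact bs_adj.2 ⟨g, hg, rfl⟩
  · exact (bs_adj.2 ⟨g, hg, rfl⟩).symm

lemma mg_cover_full {g : Equiv.Perm (Fin n)} (hg : g ∈ Gens n) (y : Equiv.Perm (Fin n)) :
    ∃! e, e ∈ Mg g ∧ y ∈ e := by
  refine ⟨s(y, y * g), ⟨mem_mg_self g y, by simp⟩, ?_⟩
  rintro e' ⟨he', hy⟩
  exact mg_cover hg y e' he' hy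

lemma avoid2 (hn : 3 ≤ n) (e1 e2 : Sym2 (Equiv.Perm (Fin n))) :
    ∃ g ∈ Gens n, e1 ∉ Mg g ∧ e2 ∉ Mg g := by
  obtain ⟨s0, t0, r0, hs, ht, hr, hst, hsr, htr⟩ := gens3 hn
  by_cases h1 : e1 ∈ Mg s0 ∨ e2 ∈ Mg s0
  · by_cases h2 : e1 ∈ Mg t0 ∨ e2 ∈ Mg t0
    · rcases h1 with h1 | h1 <;> rcases h2 with h2 | h2
      · exact absurd h2 fun h2 => mg_disjoint hs ht hst h1 h2
      · exact ⟨r0, hr, fun hm => mg_disjoint hs hr hsr h1 hm,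
          fun hm => mg_disjoint ht hr htr h2 hm⟩
      · exact ⟨r0, hr, fun hm => mg_disjoint ht hr htr h2 hm,
          fun hm => mg_disjoint hs hr hsr h1 hm⟩
      · exact absurd h2 fun h2 => mg_disjoint hs ht hst h1 h2
    · push_neg at h2
      exact ⟨t0, ht, h2.1, h2.2⟩
  · push_neg at h1
    exact ⟨s0, hs, h1.1, h1.2⟩

lemma avoid1 (hn : 3 ≤ n) (e0 : Sym2 (Equiv.Perm (Fin n))) :
    ∃ g ∈ Gens n, e0 ∉ Mg g := by
  obtain ⟨g, hg, h1, _⟩ := avoid2 hn e0 e0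
  exact ⟨g, hg, h1⟩

end SMPAux

open SMPAux

/-- For every `n ≥ 3`, every optimal strong matching preclusion set of `BS_n`
(one of size `smp(BS_n) = 2`) consists of no edges and two distinct vertices of the
same parity (i.e. lying in the same bipartition class of `BS_n`). -/
theorem smp_bubbleSortStar_optimal (n : ℕ) (hn : 3 ≤ n)
    (S : Set (Equiv.Perm (Fin n))) (F : Set (Sym2 (Equiv.Perm (Fin n))))
    (hSF : IsSMPSet (BS n) S F) (hopt : S.ncard + F.ncard = 2) :
    F = ∅ ∧ ∃ u v : Equiv.Perm (Fin n), u ≠ v ∧ S = {u, v} ∧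
      Equiv.Perm.sign u = Equiv.Perm.sign v := by
  classical
  obtain ⟨hFE, hno⟩ := hSF
  have hcases : S.ncard = 0 ∧ F.ncard = 2 ∨ S.ncard = 1 ∧ F.ncard = 1 ∨
      S.ncard = 2 ∧ F.ncard = 0 := by omega
  rcases hcases with ⟨hS0, hF2⟩ | ⟨hS1, hF1⟩ | ⟨hS2, hF0⟩
  · -- no deleted vertices, two deleted edges: a perfect matching survives
    exfalso
    rw [Set.ncard_eq_zero] at hS0
    subst hS0
    obtain ⟨e1, e2, hne, hF⟩ := Set.ncard_eq_two.1 hF2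
    subst hF
    obtain ⟨g, hg, h1, h2⟩ := avoid2 hn e1 e2
    apply And.left hno
    refine ⟨_, lift_isPM (Mg g) ?_ ?_⟩
    · intro a b hab
      refine ⟨mg_edge hg hab, ?_, by simp, by simp⟩
      intro hmem
      rcases Set.mem_insert_iff.1 hmem with h | h
      · exact h1 (h ▸ hab)
      · exact h2 ((Set.mem_singleton_iff.1 h) ▸ hab)
    · intro v _
      exact mg_cover_full hg v
  · -- one deleted vertex, one deleted edge: an almost-perfect matching survives
    exfalso
    obtain ⟨u, hS⟩ := Set.ncard_eq_one.1 hS1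
    subst hS
    obtain ⟨e0, hF⟩ := Set.ncard_eq_one.1 hF1
    subst hF
    obtain ⟨g, hg, h0⟩ := avoid1 hn e0
    have hgg : g * g = 1 := gens_mul_self hg
    have hgr : ∀ x : Equiv.Perm (Fin n), x * g * g = x := fun x => by
      rw [mul_assoc, hgg, mul_one]
    apply And.right hno
    set M₀ : Set (Sym2 (Equiv.Perm (Fin n))) :=
      {e | ∃ x, x ≠ u ∧ x * g ≠ u ∧ e = s(x, x * g)} with hM₀
    have hMg : M₀ ⊆ Mg g := by rintro e ⟨x, _, _, rfl⟩; exact ⟨x, rfl⟩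
    refine ⟨_, lift_isAPM M₀ (u * g) ?_ ?_ ?_ ?_⟩
    · simp only [Set.mem_compl_iff, Set.mem_singleton_iff]
      intro h
      exact gens_ne_one hg (mul_left_cancel (a := u) (by rw [mul_one, h]))
    · intro a b hab
      refine ⟨mg_edge hg (hMg hab), ?_, ?_, ?_⟩
      · intro hmem
        exact h0 ((Set.mem_singleton_iff.1 hmem) ▸ hMg hab)
      · obtain ⟨x, hx1, hx2, hx⟩ := hab
        rcases Sym2.eq_iff.1 hx with ⟨rfl, -⟩ | ⟨rfl, -⟩ <;>
          simp only [Set.mem_compl_iff, Set.mem_singleton_iff] <;> assumption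
      · obtain ⟨x, hx1, hx2, hx⟩ := hab
        rcases Sym2.eq_iff.1 hx with ⟨-, rfl⟩ | ⟨-, rfl⟩ <;>
          simp only [Set.mem_compl_iff, Set.mem_singleton_iff] <;> assumption
    · rintro e ⟨x, hx1, hx2, rfl⟩ hmem
      rcases Sym2.mem_iff.1 hmem with h | h
      · exact hx2 (by rw [← h, hgr])
      · exact hx1 (mul_right_cancel h).symm
    · intro y hy hyw
      rw [Set.mem_compl_iff, Set.mem_singleton_iff] at hy
      have hyg : y * g ≠ u := by
        intro h
        exact hyw (by rw [← h, hgr])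
      refine ⟨s(y, y * g), ⟨⟨y, hy, hyg, rfl⟩, by simp⟩, ?_⟩
      rintro e' ⟨⟨x, hx1, hx2, rfl⟩, hye'⟩
      rcases Sym2.mem_iff.1 hye' with rfl | h
      · rfl
      · have hx : x = y * g := by rw [h, hgr]
        subst hx
        rw [hgr, Sym2.eq_swap]
  · -- two deleted vertices: they must have the same sign
    obtain ⟨u, v, huv, hS⟩ := Set.ncard_eq_two.1 hS2
    subst hS
    rw [Set.ncard_eq_zero] at hF0
    subst hF0
    refine ⟨rfl, u, v, huv, rfl, ?_⟩
    by_contra hsne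
    have hsign : Equiv.Perm.sign v = - Equiv.Perm.sign u := by
      rcases Int.units_eq_one_or (Equiv.Perm.sign u) with h | h <;>
        rcases Int.units_eq_one_or (Equiv.Perm.sign v) with h' | h' <;>
        rw [h, h'] at hsne ⊢ <;> first | rfl | exact absurd rfl hsne | decide
    obtain ⟨s0, t0, r0, hs, -, -, -, -, -⟩ := gens3 hn
    obtain ⟨M₀, hedge, hcov⟩ := case3 hs hsign
    apply And.left hno
    refine ⟨_, lift_isPM M₀ ?_ ?_⟩
    · intro a b hab
      obtain ⟨hadj, h1, h2, h3, h4⟩ := hedge a b hab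
      refine ⟨hadj, by simp, ?_, ?_⟩ <;>
        simp only [Set.mem_compl_iff, Set.mem_insert_iff, Set.mem_singleton_iff, not_or]
      · exact ⟨h1, h2⟩
      · exact ⟨h3, h4⟩
    · intro y hy
      simp only [Set.mem_compl_iff, Set.mem_insert_iff, Set.mem_singleton_iff, not_or] at hy
      exact hcov y hy.1 hy.2
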